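/- (Theorem 4.7, characterization of adjointable bounded operators.) Let T : H →L[K] H. Then T is adjointable (there exists S : H →L[K] H with ⟪x, T y⟫ = ⟪S x, y⟫ for all x, y) if and only if for every m : ℕ, Tendsto (fun n => (T (e n)) m) atTop (nhds 0) (each row of the matrix of T tends to 0). Moreover, if S is an adjoint of T then its matrix is the conjugate transpose, (S (e n)) m = star ((T (e m)) n) for all m, n, and ‖S‖ = ‖T‖. -/

import Mathlib

set_option maxHeartbeats 1000000


open Filter

noncomputable section

variable (K : Type*) [NontriviallyNormedField K] [IsUltrametricDist K]
  [CompleteSpace K] [StarRing K] [NormedStarGroup K]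

/-- The p-adic coordinate Hilbert space: zero-convergent sequences in `K` with sup norm. -/
abbrev H := ZeroAtInftyContinuousMap ℕ K

/-- The standard basis vectors of `H K`. -/
def e (n : ℕ) : H K where
  toFun := fun m => if m = n then 1 else 0
  continuous_toFun := continuous_of_discreteTopology
  zero_at_infty' := by
    rw [cocompact_eq_atTop]
    refine Filter.Tendsto.congr' ?_ tendsto_const_nhds
    filter_upwards [Filter.eventually_gt_atTop n] with m hm
    simp [Nat.ne_of_gt hm]

/-- The canonical inner product on `H K`: `⟪x, y⟫ = ∑' i, star (x i) * y i`. -/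
def inner' (x y : H K) : K := ∑' i, star (x i) * y i

/-- A bounded operator is of trace class if its matrix entries vanish along the
cofinite filter of `ℕ × ℕ`. -/
def IsTraceClass (T : H K →L[K] H K) : Prop :=
  Tendsto (fun q : ℕ × ℕ => (T (e K q.2)) q.1) Filter.cofinite (nhds 0)

namespace Stmt4Aux

lemma e_apply (n m : ℕ) : (e K n) m = if m = n then 1 else 0 := rfl

lemma norm_apply_le (f : H K) (m : ℕ) : ‖f m‖ ≤ ‖f‖ :=
  BoundedContinuousFunction.norm_coe_le_norm f.toBCF m

lemma norm_le_of_forall {f : H K} {C : ℝ} (hC : 0 ≤ C) (h : ∀ m, ‖f m‖ ≤ C) : ‖f‖ ≤ C := by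
  rw [← ZeroAtInftyContinuousMap.norm_toBCF_eq_norm]
  exact (BoundedContinuousFunction.norm_le hC).mpr h

lemma tendsto_atTop (f : H K) : Tendsto (fun m => f m) atTop (nhds 0) := by
  have h := zero_at_infty f
  rwa [cocompact_eq_atTop] at h

lemma norm_e_le_one (n : ℕ) : ‖e K n‖ ≤ 1 := by
  refine norm_le_of_forall K zero_le_one fun m => ?_
  rw [e_apply]
  split <;> simp

lemma summable_inner (x y : H K) : Summable fun i => star (x i) * y i := by
  apply NonarchimedeanAddGroup.summable_of_tendsto_cofinite_zero
  rw [Nat.cofinite_eq_atTop]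
  refine squeeze_zero_norm (f := fun i => star (x i) * y i) (fun i => ?_)
    (show Tendsto (fun i => ‖y‖ * ‖x i‖) atTop (nhds 0) by
      simpa using ((tendsto_atTop K x).norm.const_mul ‖y‖))
  rw [norm_mul, norm_star, mul_comm]
  exact mul_le_mul_of_nonneg_right (norm_apply_le K y i) (norm_nonneg _)

lemma norm_inner_le (x y : H K) : ‖inner' K x y‖ ≤ ‖x‖ * ‖y‖ := by
  refine IsUltrametricDist.norm_tsum_le_of_forall_le_of_nonneg (by positivity) fun i => ?_
  rw [norm_mul, norm_star]
  exact mul_le_mul (norm_apply_le K x i) (norm_apply_le K y i) (norm_nonneg _) (norm_nonneg _)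

lemma inner_e_right (x : H K) (n : ℕ) : inner' K x (e K n) = star (x n) := by
  rw [inner', tsum_eq_single n]
  · simp [e_apply]
  · intro i hi
    simp [e_apply, hi]

lemma inner_e_left (y : H K) (m : ℕ) : inner' K (e K m) y = y m := by
  rw [inner', tsum_eq_single m]
  · simp [e_apply]
  · intro i hi
    simp [e_apply, hi]

lemma star_inner (x y : H K) : star (inner' K x y) = inner' K y x := by
  have h := ((summable_inner K x y).hasSum.map (starAddEquiv : K ≃+ K) continuous_star).tsum_eq
  simp only [starAddEquiv_apply, star_mul, star_star] at h
  rw [inner', inner', ← h]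
  exact tsum_congr fun i => by simp [star_mul, mul_comm]

/-- The inner product with a fixed first argument, as a continuous linear map. -/
def innerCLM (x : H K) : H K →L[K] K :=
  LinearMap.mkContinuous
    { toFun := fun y => inner' K x y
      map_add' := fun y z => by
        simp only [inner', ZeroAtInftyContinuousMap.coe_add, Pi.add_apply, mul_add]
        exact Summable.tsum_add (summable_inner K x y) (summable_inner K x z)
      map_smul' := fun c y => by
        simp only [inner', ZeroAtInftyContinuousMap.coe_smul, Pi.smul_apply, smul_eq_mul,
          RingHom.id_apply]
        rw [← tsum_mul_left]
        congr 1
        ext i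
        ring }
    ‖x‖ fun y => norm_inner_le K x y

@[simp] lemma innerCLM_apply (x y : H K) : innerCLM K x y = inner' K x y := rfl

lemma sum_apply (s : Finset ℕ) (f : ℕ → H K) (m : ℕ) :
    (∑ n ∈ s, f n) m = ∑ n ∈ s, (f n) m := by
  classical
  induction s using Finset.cons_induction with
  | empty => simp
  | cons a s ha ih => simp [Finset.sum_insert ha, ZeroAtInftyContinuousMap.coe_add, ih]

lemma partial_apply (y : H K) (s : Finset ℕ) (m : ℕ) :
    (∑ n ∈ s, y n • e K n) m = if m ∈ s then y m else 0 := by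
  classical
  rw [sum_apply]
  simp [e_apply, mul_ite]

lemma norm_sub_partial (y : H K) (s : Finset ℕ) {C : ℝ} (hC : 0 ≤ C)
    (h : ∀ m ∉ s, ‖y m‖ ≤ C) : ‖y - ∑ n ∈ s, y n • e K n‖ ≤ C := by
  classical
  refine norm_le_of_forall K hC fun m => ?_
  rw [ZeroAtInftyContinuousMap.coe_sub, Pi.sub_apply, partial_apply]
  by_cases hm : m ∈ s
  · simpa [hm] using hC
  · simpa [hm] using h m hm

lemma hasSum_basis (y : H K) : HasSum (fun n => y n • e K n) y := by
  classical
  rw [HasSum, SummationFilter.unconditional_filter, Metric.tendsto_atTop]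
  intro ε hε
  obtain ⟨N, hN⟩ := Metric.tendsto_atTop.mp (tendsto_atTop K y) (ε / 2) (half_pos hε)
  refine ⟨Finset.range N, fun s hs => ?_⟩
  rw [dist_eq_norm, ← norm_sub_rev]
  have hb : ‖y - ∑ n ∈ s, y n • e K n‖ ≤ ε / 2 := by
    refine norm_sub_partial K y s (le_of_lt (half_pos hε)) fun m hm => ?_
    have hNm : N ≤ m := by
      by_contra hc
      exact hm (hs (Finset.mem_range.mpr (not_le.mp hc)))
    have := hN m hNm
    rw [dist_zero_right] at this
    exact this.le
  linarith

lemma ext_e {f g : H K →L[K] K} (h : ∀ n, f (e K n) = g (e K n)) (y : H K) : f y = g y := by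
  have hf := (hasSum_basis K y).mapL f
  have hg := (hasSum_basis K y).mapL g
  have heq : (fun n => f (y n • e K n)) = fun n => g (y n • e K n) := by
    funext n
    rw [map_smul, map_smul, h]
  exact hf.unique (heq ▸ hg)

lemma norm_T_e_le (T : H K →L[K] H K) (n : ℕ) : ‖T (e K n)‖ ≤ ‖T‖ := by
  calc ‖T (e K n)‖ ≤ ‖T‖ * ‖e K n‖ := T.le_opNorm _
    _ ≤ ‖T‖ * 1 := mul_le_mul_of_nonneg_left (norm_e_le_one K n) (norm_nonneg T)
    _ = ‖T‖ := mul_one _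

lemma adjoint_norm_le (T S : H K →L[K] H K)
    (h : ∀ x y, inner' K x (T y) = inner' K (S x) y) : ‖S‖ ≤ ‖T‖ := by
  refine ContinuousLinearMap.opNorm_le_bound _ (norm_nonneg T) fun x => ?_
  refine norm_le_of_forall K (by positivity) fun n => ?_
  have h1 : star ((S x) n) = inner' K x (T (e K n)) := by
    rw [h x (e K n), inner_e_right]
  calc ‖(S x) n‖ = ‖star ((S x) n)‖ := (norm_star _).symm
    _ = ‖inner' K x (T (e K n))‖ := by rw [h1]
    _ ≤ ‖x‖ * ‖T (e K n)‖ := norm_inner_le K _ _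
    _ ≤ ‖x‖ * ‖T‖ := mul_le_mul_of_nonneg_left (norm_T_e_le K T n) (norm_nonneg x)
    _ = ‖T‖ * ‖x‖ := mul_comm _ _

lemma adjoint_flip {T S : H K →L[K] H K}
    (h : ∀ x y, inner' K x (T y) = inner' K (S x) y) :
    ∀ x y, inner' K x (S y) = inner' K (T x) y := by
  intro x y
  have h2 := congrArg star (h y x)
  rw [star_inner, star_inner] at h2
  exact h2.symm

end Stmt4Aux

open Stmt4Aux

/-- A bounded operator is adjointable iff each row of its matrix tends to 0; the adjoint
has the conjugate-transpose matrix and the same norm. -/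
theorem stmt4 (T : H K →L[K] H K) :
    ((∃ S : H K →L[K] H K, ∀ x y : H K, inner' K x (T y) = inner' K (S x) y) ↔
      ∀ m : ℕ, Tendsto (fun n => (T (e K n)) m) atTop (nhds 0)) ∧
    (∀ S : H K →L[K] H K, (∀ x y : H K, inner' K x (T y) = inner' K (S x) y) →
      (∀ m n : ℕ, (S (e K n)) m = star ((T (e K m)) n)) ∧ ‖S‖ = ‖T‖) := by
  classical
  constructor
  · constructor
    · rintro ⟨S, hS⟩ m
      have key : ∀ n, (T (e K n)) m = star ((S (e K m)) n) := by
        intro n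
        have h := hS (e K m) (e K n)
        rwa [inner_e_left, inner_e_right] at h
      have h2 : Tendsto (fun n => star ((S (e K m)) n)) atTop (nhds 0) := by
        simpa using (tendsto_atTop K (S (e K m))).star
      exact h2.congr fun n => (key n).symm
    · intro hT
      -- zero at infinity of the candidate adjoint applied to x
      have zero_at : ∀ x : H K, Tendsto (fun n => inner' K (T (e K n)) x) atTop (nhds 0) := by
        intro x
        rw [NormedAddCommGroup.tendsto_nhds_zero]
        intro ε hε
        set C : ℝ := ‖T‖ + 1 with hCdef
        have hC : 0 < C := by positivity
        obtain ⟨N, hN⟩ := Metric.tendsto_atTop.mp (tendsto_atTop K x) (ε / C) (by positivity)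
        set p : H K := ∑ i ∈ Finset.range N, x i • e K i with hp
        have hr : ‖x - p‖ ≤ ε / C := by
          refine norm_sub_partial K x (Finset.range N) (by positivity) fun m hm => ?_
          have hNm : N ≤ m := by simpa using hm
          have := hN m hNm
          rw [dist_zero_right] at this
          exact this.le
        have hhead : Tendsto (fun n => inner' K (T (e K n)) p) atTop (nhds 0) := by
          have hform : ∀ n, inner' K (T (e K n)) p
              = ∑ i ∈ Finset.range N, x i * star ((T (e K n)) i) := by
            intro n
            rw [hp, ← innerCLM_apply, map_sum]
            refine Finset.sum_congr rfl fun i _ => ?_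
            rw [map_smul, smul_eq_mul, innerCLM_apply, inner_e_right]
          have h0 : Tendsto (fun n => ∑ i ∈ Finset.range N, x i * star ((T (e K n)) i))
              atTop (nhds 0) := by
            have := tendsto_finset_sum (Finset.range N)
              (fun i (_ : i ∈ Finset.range N) => (((hT i).star).const_mul (x i)))
            simpa using this
          exact h0.congr fun n => (hform n).symm
        have hev := (NormedAddCommGroup.tendsto_nhds_zero.mp hhead) ε hε
        filter_upwards [hev] with n hn
        have hsplit : inner' K (T (e K n)) x
            = inner' K (T (e K n)) p + inner' K (T (e K n)) (x - p) := by
          rw [← innerCLM_apply, ← innerCLM_apply, ← innerCLM_apply, ← map_add]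
          congr 1
          abel
        rw [hsplit]
        refine lt_of_le_of_lt (IsUltrametricDist.norm_add_le_max _ _) (max_lt hn ?_)
        calc ‖inner' K (T (e K n)) (x - p)‖ ≤ ‖T (e K n)‖ * ‖x - p‖ := norm_inner_le K _ _
          _ ≤ ‖T‖ * (ε / C) :=
            mul_le_mul (norm_T_e_le K T n) hr (norm_nonneg _) (norm_nonneg T)
          _ < C * (ε / C) := by
            exact mul_lt_mul_of_pos_right (by rw [hCdef]; linarith) (by positivity)
          _ = ε := by field_simp
      -- build the adjoint
      let Slin : H K →ₗ[K] H K :=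
        { toFun := fun x =>
            { toFun := fun n => inner' K (T (e K n)) x
              continuous_toFun := continuous_of_discreteTopology
              zero_at_infty' := by rw [cocompact_eq_atTop]; exact zero_at x }
          map_add' := fun x y => by
            ext n
            exact map_add (innerCLM K (T (e K n))) x y
          map_smul' := fun c x => by
            ext n
            exact map_smul (innerCLM K (T (e K n))) c x }
      have Sbound : ∀ x, ‖Slin x‖ ≤ ‖T‖ * ‖x‖ := by
        intro x
        refine norm_le_of_forall K (by positivity) fun n => ?_
        calc ‖inner' K (T (e K n)) x‖ ≤ ‖T (e K n)‖ * ‖x‖ := norm_inner_le K _ _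
          _ ≤ ‖T‖ * ‖x‖ := mul_le_mul_of_nonneg_right (norm_T_e_le K T n) (norm_nonneg x)
      refine ⟨Slin.mkContinuous ‖T‖ Sbound, fun x y => ?_⟩
      have goal : ((innerCLM K x).comp T) y = innerCLM K (Slin.mkContinuous ‖T‖ Sbound x) y := by
        refine ext_e K (fun n => ?_) y
        simp only [ContinuousLinearMap.comp_apply, innerCLM_apply]
        rw [inner_e_right]
        have hSx : ((Slin.mkContinuous ‖T‖ Sbound x) : H K) n = inner' K (T (e K n)) x := rfl
        rw [hSx, star_inner]
      simpa using goal
  · intro S hS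
    constructor
    · intro m n
      have h := hS (e K n) (e K m)
      rw [inner_e_left, inner_e_right] at h
      rw [h, star_star]
    · exact le_antisymm (adjoint_norm_le K T S hS) (adjoint_norm_le K S T (adjoint_flip K hS))
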